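/- arXiv:2104.12821 — 2 statements merged into one kernel-verified Lean document; each statement's English description precedes it below -/
import Mathlib

section
/- Let p ≥ 1. For a ring with Z-basis {x_s^+, x_s^- : 1 ≤ s ≤ p} satisfying the fusion rules of rep(W_p), the Frobenius–Perron dimension of each basis element x_s^± equals s, i.e., the unique ring homomorphism to ℝ taking positive values on the basis sends x_s^± to s. -/
/-- Fusion rules of rep(W_p), with guards so that they make sense for all p ≥ 1. -/
def fusionRulesW (p : ℕ) (hp : 1 ≤ p) {K : Type} [CommRing K]
    (B : Module.Basis (Bool × Fin p) ℤ K) : Prop :=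
  B (true, ⟨0, by omega⟩) = 1 ∧
  (∀ (ε : Bool) (s : Fin p), B (false, ⟨0, by omega⟩) * B (ε, s) = B (!ε, s)) ∧
  (∀ (ε : Bool) (s : ℕ) (hs1 : 1 ≤ s) (hs2 : s + 2 ≤ p),
    B (true, ⟨1, by omega⟩) * B (ε, ⟨s, by omega⟩)
      = B (ε, ⟨s - 1, by omega⟩) + B (ε, ⟨s + 1, by omega⟩)) ∧
  (∀ h2 : 2 ≤ p, ∀ ε : Bool, B (true, ⟨1, by omega⟩) * B (ε, ⟨p - 1, by omega⟩)
      = 2 * B (!ε, ⟨0, by omega⟩) + 2 * B (ε, ⟨p - 2, by omega⟩))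

/-- Chebyshev-like sequence: `cheb d s` is the normalized Chebyshev polynomial of the
    second kind evaluated at `d/2`. -/
def cheb (d : ℝ) : ℕ → ℝ
  | 0 => 1
  | 1 => d
  | n + 2 => d * cheb d (n + 1) - cheb d n

lemma cheb_inv (d : ℝ) (n : ℕ) :
    (cheb d (n + 1)) ^ 2 + (cheb d n) ^ 2 - d * (cheb d (n + 1) * cheb d n) = 1 := by
  induction n with
  | zero => simp [cheb]; ring
  | succ n ih =>
    have h : cheb d (n + 2) = d * cheb d (n + 1) - cheb d n := rfl
    rw [h]
    linear_combination ih

lemma cheb_two (s : ℕ) : cheb 2 s = (s : ℝ) + 1 := by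
  induction s using Nat.strong_induction_on with
  | _ s ih =>
    match s with
    | 0 => simp [cheb]
    | 1 => norm_num [cheb]
    | n + 2 =>
      have h : cheb 2 (n + 2) = 2 * cheb 2 (n + 1) - cheb 2 n := rfl
      rw [h, ih (n + 1) (by omega), ih n (by omega)]
      push_cast
      ring

/-- Any ring homomorphism to ℝ taking positive values on the basis of the fusion ring of
    rep(W_p) sends the basis element x_s^± (index s : Fin p, of "dimension" s+1) to s+1. -/
theorem stmt14 (p : ℕ) (hp : 1 ≤ p) (K : Type) [CommRing K]
    (B : Module.Basis (Bool × Fin p) ℤ K) (hK : fusionRulesW p hp B)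
    (φ : K →+* ℝ) (hpos : ∀ i, 0 < φ (B i)) :
    ∀ (ε : Bool) (s : Fin p), φ (B (ε, s)) = (s : ℝ) + 1 := by
  obtain ⟨h1, h2, h3, h4⟩ := hK
  have hone : φ (B (true, ⟨0, by omega⟩)) = 1 := by rw [h1, map_one]
  -- φ(x₁⁻) = 1
  have hc : φ (B (false, ⟨0, by omega⟩)) = 1 := by
    have hsq := congrArg φ (h2 false ⟨0, by omega⟩)
    rw [map_mul] at hsq
    simp only [Bool.not_false] at hsq
    rw [hone] at hsq
    have := hpos (false, ⟨0, by omega⟩)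
    nlinarith [hsq, this]
  have hflip : ∀ s : Fin p, φ (B (false, s)) = φ (B (true, s)) := by
    intro s
    have h := congrArg φ (h2 true s)
    rw [map_mul, hc, one_mul] at h
    simpa using h.symm
  have Htrue : ∀ (s : ℕ) (h : s < p), φ (B (true, ⟨s, h⟩)) = (s : ℝ) + 1 := by
    by_cases hp2 : 2 ≤ p
    · -- the main case
      set d := φ (B (true, ⟨1, by omega⟩)) with hd
      have hA : ∀ (s : ℕ) (h : s < p), φ (B (true, ⟨s, h⟩)) = cheb d s := by
        intro s
        induction s using Nat.strong_induction_on with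
        | _ s ih =>
          intro h
          match s with
          | 0 => rw [show cheb d 0 = 1 from rfl]; exact hone
          | 1 => rw [show cheb d 1 = d from rfl, hd]
          | n + 2 =>
            have hr := congrArg φ (h3 true (n + 1) (by omega) (by omega))
            rw [map_mul, map_add] at hr
            have e1 : φ (B (true, ⟨n + 1, by omega⟩)) = cheb d (n + 1) :=
              ih (n + 1) (by omega) (by omega)
            have e0 : φ (B (true, ⟨n + 1 - 1, by omega⟩)) = cheb d n :=
              ih n (by omega) (by omega)
            rw [e1, e0] at hr
            rw [show cheb d (n + 2) = d * cheb d (n + 1) - cheb d n from rfl]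
            rw [← hd] at hr
            linarith [hr]
      have hbd := congrArg φ (h4 hp2 true)
      simp only [map_mul, map_add, map_ofNat, Bool.not_true] at hbd
      rw [hc, hA (p - 1) (by omega), hA (p - 2) (by omega), ← hd, mul_one] at hbd
      set x := cheb d (p - 2) with hx
      set y := cheb d (p - 1) with hy
      have hinv : y ^ 2 + x ^ 2 - d * (y * x) = 1 := by
        have := cheb_inv d (p - 2)
        rw [show p - 2 + 1 = p - 1 by omega] at this
        rw [hx, hy]
        exact this
      have hypos : 0 < y := by
        rw [hy, ← hA (p - 1) (by omega)]
        exact hpos _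
      have hdpos : 0 < d := hpos _
      have key : (d - 2) * ((d + 2) * y ^ 2) = 0 := by
        linear_combination (d * y + 2 - 2 * x) * hbd - 4 * hinv
      have hd2 : d = 2 := by
        rcases mul_eq_zero.mp key with h | h
        · linarith
        · nlinarith [hypos, hdpos]
      intro s hs
      rw [hA s hs, hd2, cheb_two]
    · -- p = 1
      intro s hs
      have hs0 : s = 0 := by omega
      subst hs0
      rw [show (⟨0, hs⟩ : Fin p) = ⟨0, by omega⟩ from rfl, hone]
      norm_num
  intro ε s
  cases ε with
  | true =>
    have := Htrue s.1 s.2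
    simpa using this
  | false =>
    rw [hflip s]
    have := Htrue s.1 s.2
    simpa using this
end

section
/- Let p ≥ 2 and q = e^{πi/p}. The twist eigenvalue on X₂⁺ ⊗ X_p^± (values -e^{3πip/2} or 1) differs from the scalar θ(X₂⁺)·θ(X_p^±), which equals e^{3πip/2}·q or q respectively; explicitly (-1)^p q^{(p²-1)/2} q^{3/2} = e^{3πip/2} q and ( -e^{3πip/2} q^{(p²-1)/2})·(-q^{3/2}) = q, and in both cases the ratio of the twist eigenvalue to this scalar is not 1. -/
/-- For p ≥ 2 and q = e^{πi/p} (q^x = e^{πix/p}, e = e^{3πip/2}):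
    (-1)^p q^{(p²-1)/2} q^{3/2} = e·q and (-e·q^{(p²-1)/2})·(-q^{3/2}) = q, while the ratios
    (-e)/(e·q) and 1/q of the corresponding twist eigenvalues to these scalars are not 1. -/
theorem stmt17 (p : ℕ) (hp : 2 ≤ p)
    (q q32 e qp2 : ℂ)
    (hq : q = Complex.exp (Real.pi * Complex.I / (p : ℂ)))
    (hq32 : q32 = Complex.exp (Real.pi * Complex.I * (3 / 2) / (p : ℂ)))
    (he : e = Complex.exp (3 * Real.pi * Complex.I * (p : ℂ) / 2))
    (hqp2 : qp2 = Complex.exp (Real.pi * Complex.I * (((p : ℂ) ^ 2 - 1) / 2) / (p : ℂ))) :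
    (-1 : ℂ) ^ p * qp2 * q32 = e * q ∧
    (-e * qp2) * (-q32) = q ∧
    (-e) / (e * q) ≠ 1 ∧
    (1 : ℂ) / q ≠ 1 := by
  have hp0 : (p : ℂ) ≠ 0 := Nat.cast_ne_zero.mpr (by omega)
  have hpR : (2 : ℝ) ≤ (p : ℝ) := by exact_mod_cast hp
  have hneg : ((-1 : ℂ)) ^ p = Complex.exp ((p : ℂ) * (Real.pi * Complex.I)) := by
    rw [← Complex.exp_pi_mul_I, ← Complex.exp_nat_mul]
  have hqne : q ≠ 0 := hq ▸ Complex.exp_ne_zero _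
  have hene : e ≠ 0 := he ▸ Complex.exp_ne_zero _
  have hpi : (Real.pi : ℂ) ≠ 0 := by exact_mod_cast Real.pi_ne_zero
  have hpiI : (Real.pi : ℂ) * Complex.I ≠ 0 := mul_ne_zero hpi Complex.I_ne_zero
  refine ⟨?_, ?_, ?_, ?_⟩
  · rw [hneg, hqp2, hq32, he, hq, ← Complex.exp_add, ← Complex.exp_add, ← Complex.exp_add]
    congr 1
    field_simp
    ring
  · have h2pi : Complex.exp ((p : ℂ) * (2 * Real.pi * Complex.I)) = 1 := by
      rw [Complex.exp_nat_mul]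
      rw [Complex.exp_two_pi_mul_I, one_pow]
    have key : e * qp2 * q32 = Complex.exp ((p : ℂ) * (2 * Real.pi * Complex.I)) * q := by
      rw [hqp2, hq32, he, hq, ← Complex.exp_add, ← Complex.exp_add, ← Complex.exp_add]
      congr 1
      field_simp
      ring
    calc (-e * qp2) * (-q32) = e * qp2 * q32 := by ring
      _ = Complex.exp ((p : ℂ) * (2 * Real.pi * Complex.I)) * q := key
      _ = q := by rw [h2pi, one_mul]
  · intro h
    rw [div_eq_one_iff_eq (mul_ne_zero hene hqne)] at h
    have hq1 : q = -1 := mul_left_cancel₀ hene (by linear_combination -h)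
    rw [hq, ← Complex.exp_pi_mul_I, Complex.exp_eq_exp_iff_exists_int] at hq1
    obtain ⟨n, hn⟩ := hq1
    field_simp at hn
    have h4 : (Real.pi : ℂ) * Complex.I * 1 =
        (Real.pi : ℂ) * Complex.I * ((1 + 2 * n) * p) := by linear_combination ((Real.pi : ℂ) * Complex.I) * hn
    have h5 : (1 : ℂ) = (1 + 2 * (n : ℂ)) * p := mul_left_cancel₀ hpiI h4
    have hre : (1 : ℝ) = (1 + 2 * (n : ℝ)) * p := by exact_mod_cast h5
    rcases le_or_gt 0 n with hn' | hn'
    · have h6 : (0 : ℝ) ≤ (n : ℝ) := by exact_mod_cast hn'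
      nlinarith
    · have h7 : n ≤ -1 := by omega
      have h6 : (n : ℝ) ≤ -1 := by exact_mod_cast h7
      nlinarith
  · intro h
    rw [div_eq_one_iff_eq hqne, eq_comm, hq, Complex.exp_eq_one_iff] at h
    obtain ⟨n, hn⟩ := h
    field_simp at hn
    have h4 : (Real.pi : ℂ) * Complex.I * 1 =
        (Real.pi : ℂ) * Complex.I * (2 * n * p) := by linear_combination ((Real.pi : ℂ) * Complex.I) * hn
    have h5 : (1 : ℂ) = 2 * (n : ℂ) * p := mul_left_cancel₀ hpiI h4
    have hre : (1 : ℝ) = 2 * (n : ℝ) * p := by exact_mod_cast h5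
    rcases lt_trichotomy n 0 with hn' | hn' | hn'
    · have h7 : n ≤ -1 := by omega
      have h6 : (n : ℝ) ≤ -1 := by exact_mod_cast h7
      nlinarith
    · rw [hn'] at hre; norm_num at hre
    · have h6 : (1 : ℝ) ≤ (n : ℝ) := by exact_mod_cast hn'
      nlinarith
end
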